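/- There is an absolute constant C > 0 with the following property. Let m be a positive integer and π : ℤ → ℂ an m-periodic function with |π(x)| = 1 for all x ∈ ℤ. Set ℳ := max_{n mod m} |Σ_{b=0}^{m−1} e(bn/m)·π(b)|, where e(x) := e^{2πix}. Then for every real ℓ > 0 and every interval I ⊂ ℝ of length ℓ: |Σ_{x ∈ I ∩ ℤ} π(x)| ≤ C·(√(ℳℓ) + ℳℓ/m + 1). -/

import Mathlib

/-- `ℳ = max_{n mod m} |∑_{b mod m} e(bn/m) π(b)|`, where `e(x) = e^{2πix}`. -/
noncomputable def expSumMax (m : ℕ) (f : ℤ → ℂ) : ℝ :=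
  ⨆ n : Fin m, ‖∑ b ∈ Finset.range m,
      Complex.exp (2 * Real.pi * Complex.I * (((b : ℝ) * ((n : ℕ) : ℝ) / (m : ℝ) : ℝ) : ℂ)) *
        f (b : ℤ)‖

open Finset Complex

noncomputable def e (r : ℝ) : ℂ := Complex.exp (2 * Real.pi * Complex.I * r)



lemma e_add (a b : ℝ) : e (a + b) = e a * e b := by
  rw [e, e, e, ← Complex.exp_add]; push_cast; ring_nf

lemma e_int (k : ℤ) : e k = 1 := by
  rw [e, show ((2 : ℂ) * Real.pi * Complex.I * ((k:ℤ):ℝ)) = (k : ℤ) * (2 * Real.pi * Complex.I) by push_cast; ring]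
  exact Complex.exp_int_mul_two_pi_mul_I k

lemma e_conj (r : ℝ) : (starRingEnd ℂ) (e r) = e (-r) := by
  rw [e, e, ← Complex.exp_conj]
  congr 1
  simp [Complex.ext_iff]

lemma norm_e (r : ℝ) : ‖e r‖ = 1 := by
  rw [e, Complex.norm_exp]
  norm_num [Complex.mul_re, Complex.mul_im]

lemma e_eq_one_iff {m : ℕ} (hm : 0 < m) (k : ℤ) : e (k / m) = 1 ↔ (m:ℤ) ∣ k := by
  have hm' : (m:ℂ) ≠ 0 := by exact_mod_cast Nat.cast_ne_zero.mpr hm.ne'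
  have hpi : (Real.pi:ℂ) ≠ 0 := by exact_mod_cast Real.pi_ne_zero
  have h2 : (2:ℂ) * Real.pi * Complex.I ≠ 0 := by
    simp [Complex.I_ne_zero, hpi]
  rw [e, Complex.exp_eq_one_iff]
  constructor
  · rintro ⟨n, hn⟩
    refine ⟨n, ?_⟩
    push_cast at hn
    field_simp at hn
    have : (k : ℂ) = m * n := by
      apply mul_left_cancel₀ h2
      rw [hn]
    exact_mod_cast this
  · rintro ⟨j, rfl⟩
    refine ⟨j, ?_⟩
    push_cast
    field_simp

lemma orth {m : ℕ} (hm : 0 < m) (k : ℤ) :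
    ∑ n ∈ range m, e (k * n / m) = if (m:ℤ) ∣ k then (m:ℂ) else 0 := by
  have hterm : ∀ n : ℕ, e (k * n / m) = e (k / m) ^ n := by
    intro n
    rw [e, e, ← Complex.exp_nat_mul]
    congr 1
    push_cast
    ring
  simp only [hterm]
  by_cases hdvd : (m:ℤ) ∣ k
  · rw [if_pos hdvd, (e_eq_one_iff hm k).mpr hdvd]
    simp
  · rw [if_neg hdvd]
    have hne : e (k / m) ≠ 1 := fun h => hdvd ((e_eq_one_iff hm k).mp h)
    rw [geom_sum_eq hne]
    have : e (k / m) ^ m = 1 := by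
      rw [← hterm m]
      have hm' : (m:ℝ) ≠ 0 := Nat.cast_ne_zero.mpr hm.ne'
      rw [show (k : ℝ) * m / m = ((k:ℤ):ℝ) by field_simp]
      exact e_int k
    rw [this]
    simp

lemma dvd_range_eq {m : ℕ} {b b' : ℕ} (hb : b < m) (hb' : b' < m)
    (h : (m:ℤ) ∣ (b:ℤ) - b') : b = b' := by
  have := Int.eq_zero_of_dvd_of_natAbs_lt_natAbs h (by omega)
  omega

lemma mul_conj_norm_sq (z : ℂ) : z * (starRingEnd ℂ) z = ((‖z‖^2 : ℝ) : ℂ) := by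
  rw [Complex.mul_conj, Complex.normSq_eq_norm_sq]

lemma parseval {m : ℕ} (hm : 0 < m) (g : ℕ → ℂ) :
    ∑ n ∈ range m, ‖∑ b ∈ range m, e ((b:ℝ) * n / m) * g b‖^2
      = m * ∑ b ∈ range m, ‖g b‖^2 := by
  have hmR : (m:ℝ) ≠ 0 := Nat.cast_ne_zero.mpr hm.ne'
  have key : ∑ n ∈ range m, ((∑ b ∈ range m, e ((b:ℝ) * n / m) * g b) *
      (starRingEnd ℂ) (∑ b ∈ range m, e ((b:ℝ) * n / m) * g b))
      = (m:ℂ) * ∑ b ∈ range m, (g b * (starRingEnd ℂ) (g b)) := by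
    calc ∑ n ∈ range m, ((∑ b ∈ range m, e ((b:ℝ) * n / m) * g b) *
          (starRingEnd ℂ) (∑ b ∈ range m, e ((b:ℝ) * n / m) * g b))
        = ∑ n ∈ range m, ∑ b ∈ range m, ∑ b' ∈ range m,
            (g b * (starRingEnd ℂ) (g b')) * (e ((b:ℝ) * n / m) * e (-((b':ℝ) * n / m))) := by
          refine sum_congr rfl fun n _ => ?_
          rw [map_sum, Finset.sum_mul_sum]
          refine sum_congr rfl fun b _ => sum_congr rfl fun b' _ => ?_
          rw [map_mul, e_conj]
          ring
      _ = ∑ b ∈ range m, ∑ b' ∈ range m, ∑ n ∈ range m,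
            (g b * (starRingEnd ℂ) (g b')) * (e ((b:ℝ) * n / m) * e (-((b':ℝ) * n / m))) := by
          rw [Finset.sum_comm]
          exact sum_congr rfl fun b _ => Finset.sum_comm
      _ = ∑ b ∈ range m, ∑ b' ∈ range m,
            (g b * (starRingEnd ℂ) (g b')) * (if (m:ℤ) ∣ (b:ℤ) - b' then (m:ℂ) else 0) := by
          refine sum_congr rfl fun b _ => sum_congr rfl fun b' _ => ?_
          rw [← Finset.mul_sum]
          congr 1
          rw [← orth hm ((b:ℤ) - b')]
          refine sum_congr rfl fun n _ => ?_
          rw [← e_add]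
          congr 1
          push_cast
          ring
      _ = ∑ b ∈ range m, (g b * (starRingEnd ℂ) (g b)) * (m:ℂ) := by
          refine sum_congr rfl fun b hb => ?_
          rw [Finset.sum_eq_single_of_mem b hb]
          · rw [if_pos (by simp)]
          · intro b' hb' hne
            rw [if_neg, mul_zero]
            intro hdvd
            exact hne (dvd_range_eq (mem_range.mp hb) (mem_range.mp hb') hdvd).symm
      _ = (m:ℂ) * ∑ b ∈ range m, (g b * (starRingEnd ℂ) (g b)) := by
          rw [Finset.mul_sum]
          exact sum_congr rfl fun b _ => mul_comm _ _
  simp only [mul_conj_norm_sq] at key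
  push_cast at key
  exact_mod_cast key

lemma parseval' {m : ℕ} (hm : 0 < m) (c : ℕ → ℂ) :
    ∑ x ∈ range m, ‖∑ n ∈ range m, e (-((x:ℝ) * n / m)) * c n‖^2
      = m * ∑ n ∈ range m, ‖c n‖^2 := by
  have h : ∀ x : ℕ, ‖∑ n ∈ range m, e (-((x:ℝ) * n / m)) * c n‖
      = ‖∑ n ∈ range m, e ((n:ℝ) * x / m) * (starRingEnd ℂ) (c n)‖ := by
    intro x
    have : ∑ n ∈ range m, e ((n:ℝ) * x / m) * (starRingEnd ℂ) (c n)
        = (starRingEnd ℂ) (∑ n ∈ range m, e (-((x:ℝ) * n / m)) * c n) := by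
      rw [map_sum]
      refine sum_congr rfl fun n _ => ?_
      rw [map_mul, e_conj, neg_neg]
      have hc : (n:ℝ) * x = (x:ℝ) * n := mul_comm _ _
      rw [hc]
    rw [this, RCLike.norm_conj]
  simp only [h]
  rw [parseval hm]
  congr 1
  exact sum_congr rfl fun n _ => by rw [RCLike.norm_conj]

section PeriodicF

lemma per_mul {α : Type*} {f : ℤ → α} {m : ℕ} (hper : ∀ x : ℤ, f (x + m) = f x) (k x : ℤ) :
    f (x + m * k) = f x := by
  induction k using Int.induction_on with
  | zero => simp
  | succ n ih => rw [show x + (m:ℤ) * (n + 1) = (x + m * n) + m by ring, hper, ih]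
  | pred n ih =>
      have h : x + (m:ℤ) * (-(n:ℤ) - 1) + m = x + m * (-(n:ℤ)) := by ring
      rw [← ih, ← h, hper]

lemma f_mod {α : Type*} {f : ℤ → α} {m : ℕ} (hper : ∀ x : ℤ, f (x + m) = f x) (x : ℤ) :
    f x = f (x % m) := by
  conv_lhs => rw [← Int.emod_add_mul_ediv x m]
  exact per_mul hper (x / m) (x % m)

lemma mod_injOn {m : ℕ} (hm : 0 < m) {a B : ℤ} (hlen : B - a + 1 ≤ m) :
    ∀ x ∈ Finset.Icc a B, ∀ y ∈ Finset.Icc a B,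
      (x % m).toNat = (y % m).toNat → x = y := by
  intro x hx y hy hxy
  rw [Finset.mem_Icc] at hx hy
  have hm0 : (m:ℤ) ≠ 0 := by exact_mod_cast hm.ne'
  have h1 : x % m = y % m := by
    have := Int.emod_nonneg x hm0
    have := Int.emod_nonneg y hm0
    omega
  have h2 : (m:ℤ) ∣ x - y := by
    apply Int.dvd_of_emod_eq_zero
    rw [Int.sub_emod, h1, sub_self, Int.zero_emod]
  have := Int.eq_zero_of_dvd_of_natAbs_lt_natAbs h2 (by omega)
  omega

lemma mod_mem_range {m : ℕ} (hm : 0 < m) (x : ℤ) : (x % m).toNat ∈ range m := by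
  have hm0 : (m:ℤ) ≠ 0 := by exact_mod_cast hm.ne'
  have := Int.emod_nonneg x hm0
  have := Int.emod_lt_of_pos x (show (0:ℤ) < m by exact_mod_cast hm)
  rw [mem_range]
  omega

lemma f_mod_toNat {α : Type*} {f : ℤ → α} {m : ℕ} (hm : 0 < m) (hper : ∀ x : ℤ, f (x + m) = f x) (x : ℤ) :
    f x = f ((x % m).toNat : ℤ) := by
  rw [f_mod hper x]
  congr 1
  have hm0 : (m:ℤ) ≠ 0 := by exact_mod_cast hm.ne'
  have := Int.emod_nonneg x hm0
  omega

lemma image_mod_eq_range {m : ℕ} (hm : 0 < m) (a : ℤ) :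
    (Finset.Icc a (a + m - 1)).image (fun x : ℤ => (x % m).toNat) = range m := by
  apply Finset.eq_of_subset_of_card_le
  · intro b hb
    simp only [Finset.mem_image] at hb
    obtain ⟨x, _, rfl⟩ := hb
    exact mod_mem_range hm x
  · rw [Finset.card_range, Finset.card_image_of_injOn, Int.card_Icc]
    · omega
    · intro x hx y hy hxy
      exact mod_injOn hm (by omega) x hx y hy hxy

lemma sum_one_period {f : ℤ → ℂ} {m : ℕ} (hm : 0 < m) (hper : ∀ x : ℤ, f (x + m) = f x) (a : ℤ) :
    ∑ x ∈ Finset.Icc a (a + m - 1), f x = ∑ b ∈ range m, f b := by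
  rw [← image_mod_eq_range hm a, Finset.sum_image (mod_injOn hm (by omega))]
  exact sum_congr rfl fun x _ => f_mod_toNat hm hper x

lemma sum_le_period {m : ℕ} (hm : 0 < m) {g : ℤ → ℝ} (hg0 : ∀ x, 0 ≤ g x)
    (hgper : ∀ x : ℤ, g (x + m) = g x) {a B : ℤ} (hlen : B - a + 1 ≤ m) :
    ∑ x ∈ Finset.Icc a B, g x ≤ ∑ b ∈ range m, g b := by
  have hmod : ∀ x : ℤ, g x = g ((x % m).toNat : ℤ) := fun x => f_mod_toNat hm hgper x
  calc ∑ x ∈ Finset.Icc a B, g x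
      = ∑ b ∈ (Finset.Icc a B).image (fun x : ℤ => (x % m).toNat), g b := by
        rw [Finset.sum_image (mod_injOn hm hlen)]
        exact sum_congr rfl fun x _ => hmod x
    _ ≤ ∑ b ∈ range m, g b := by
        apply Finset.sum_le_sum_of_subset_of_nonneg
        · intro b hb
          simp only [Finset.mem_image] at hb
          obtain ⟨x, _, rfl⟩ := hb
          exact mod_mem_range hm x
        · intro b _ _
          exact hg0 b

end PeriodicF

lemma inversion {m : ℕ} (hm : 0 < m) {f : ℤ → ℂ} (hper : ∀ x : ℤ, f (x + m) = f x) (x : ℤ) :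
    ∑ n ∈ range m, e (-((x:ℝ) * n / m)) * (∑ b ∈ range m, e ((b:ℝ) * n / m) * f b)
      = m * f x := by
  calc ∑ n ∈ range m, e (-((x:ℝ) * n / m)) * (∑ b ∈ range m, e ((b:ℝ) * n / m) * f b)
      = ∑ n ∈ range m, ∑ b ∈ range m, e ((((b:ℤ) - x : ℤ):ℝ) * n / m) * f b := by
        refine sum_congr rfl fun n _ => ?_
        rw [Finset.mul_sum]
        refine sum_congr rfl fun b _ => ?_
        rw [← mul_assoc, ← e_add]
        congr 2
        push_cast
        ring
    _ = ∑ b ∈ range m, (∑ n ∈ range m, e ((((b:ℤ) - x : ℤ):ℝ) * n / m)) * f b := by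
        rw [Finset.sum_comm]
        exact sum_congr rfl fun b _ => by rw [Finset.sum_mul]
    _ = ∑ b ∈ range m, (if (m:ℤ) ∣ (b:ℤ) - x then (m:ℂ) else 0) * f b := by
        refine sum_congr rfl fun b _ => ?_
        rw [orth hm ((b:ℤ) - x)]
    _ = m * f x := by
        rw [Finset.sum_eq_single_of_mem ((x % m).toNat) (mod_mem_range hm x)]
        · rw [if_pos, ← f_mod_toNat hm hper x]
          have hm0 : (m:ℤ) ≠ 0 := by exact_mod_cast hm.ne'
          refine ⟨-(x / m), ?_⟩
          have h1 : 0 ≤ x % (m:ℤ) := Int.emod_nonneg x hm0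
          have h2 : ((x % (m:ℤ)).toNat : ℤ) = x % m := by omega
          rw [h2]
          have := Int.emod_add_mul_ediv x m
          ring_nf
          omega
        · intro b hb hne
          rw [if_neg, zero_mul]
          intro hdvd
          apply hne
          have hm0 : (m:ℤ) ≠ 0 := by exact_mod_cast hm.ne'
          have h1 : 0 ≤ x % (m:ℤ) := Int.emod_nonneg x hm0
          have h2 : x % (m:ℤ) < m := Int.emod_lt_of_pos x (by exact_mod_cast hm)
          have hb' := Finset.mem_range.mp hb
          have hdvd2 : (m:ℤ) ∣ ((x % m).toNat : ℤ) - x := by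
            refine ⟨-(x / m), ?_⟩
            have h3 : ((x % (m:ℤ)).toNat : ℤ) = x % m := by omega
            rw [h3]
            have := Int.emod_add_mul_ediv x m
            ring_nf
            omega
          have hdvd3 : (m:ℤ) ∣ (b:ℤ) - ((x % m).toNat : ℤ) := by
            have := dvd_sub hdvd hdvd2
            simpa using this
          have := Int.eq_zero_of_dvd_of_natAbs_lt_natAbs hdvd3 (by omega)
          omega

lemma G_eq {m : ℕ} (hm : 0 < m) {f : ℤ → ℂ} (hper : ∀ x : ℤ, f (x + m) = f x)
    (H : ℕ) (x : ℤ) :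
    ∑ h ∈ range H, f (x + h)
      = ∑ n ∈ range m, e (-((x:ℝ) * n / m)) *
          ((m:ℂ)⁻¹ * ((starRingEnd ℂ) (∑ h ∈ range H, e ((h:ℝ) * n / m)) *
            (∑ b ∈ range m, e ((b:ℝ) * n / m) * f b))) := by
  have hm0 : (m:ℂ) ≠ 0 := by exact_mod_cast hm.ne'
  calc ∑ h ∈ range H, f (x + h)
      = ∑ h ∈ range H, (m:ℂ)⁻¹ * ∑ n ∈ range m, e (-((((x + h : ℤ)):ℝ) * n / m)) *
          (∑ b ∈ range m, e ((b:ℝ) * n / m) * f b) := by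
        refine sum_congr rfl fun h _ => ?_
        rw [inversion hm hper (x + h)]
        field_simp
    _ = (m:ℂ)⁻¹ * ∑ n ∈ range m, ∑ h ∈ range H, e (-((((x + h : ℤ)):ℝ) * n / m)) *
          (∑ b ∈ range m, e ((b:ℝ) * n / m) * f b) := by
        rw [← Finset.mul_sum, Finset.sum_comm]
    _ = ∑ n ∈ range m, e (-((x:ℝ) * n / m)) *
          ((m:ℂ)⁻¹ * ((starRingEnd ℂ) (∑ h ∈ range H, e ((h:ℝ) * n / m)) *
            (∑ b ∈ range m, e ((b:ℝ) * n / m) * f b))) := by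
        rw [Finset.mul_sum]
        refine sum_congr rfl fun n _ => ?_
        rw [map_sum]
        have h1 : ∀ h ∈ range H, e (-((((x + h : ℤ)):ℝ) * n / m)) *
            (∑ b ∈ range m, e ((b:ℝ) * n / m) * f b)
            = (e (-((x:ℝ) * n / m)) * (starRingEnd ℂ) (e ((h:ℝ) * n / m))) *
              (∑ b ∈ range m, e ((b:ℝ) * n / m) * f b) := by
          intro h _
          rw [e_conj, ← e_add]
          congr 2
          push_cast
          ring
        rw [Finset.sum_congr rfl h1, ← Finset.sum_mul, ← Finset.mul_sum]
        ring

lemma sum_ite_range {M : Type*} [AddCommMonoid M] {m H : ℕ} (hH : H ≤ m) (t : ℕ → M) :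
    ∑ b ∈ range m, (if b < H then t b else 0) = ∑ b ∈ range H, t b := by
  rw [← Finset.sum_filter]
  congr 1
  ext b
  simp only [Finset.mem_filter, Finset.mem_range]
  omega

lemma Dsq {m : ℕ} (hm : 0 < m) {H : ℕ} (hH : H ≤ m) :
    ∑ n ∈ range m, ‖∑ h ∈ range H, e ((h:ℝ) * n / m)‖^2 = m * H := by
  have h1 : ∀ n : ℕ, ∑ h ∈ range H, e ((h:ℝ) * n / m)
      = ∑ b ∈ range m, e ((b:ℝ) * n / m) * (if b < H then 1 else 0) := by
    intro n
    rw [show (∑ b ∈ range m, e ((b:ℝ) * n / m) * (if b < H then 1 else 0))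
        = ∑ b ∈ range m, (if b < H then e ((b:ℝ) * n / m) else 0) by
      refine sum_congr rfl fun b _ => ?_
      split <;> simp]
    rw [sum_ite_range hH]
  simp only [h1]
  rw [parseval hm]
  have h2 : ∀ b : ℕ, ‖(if b < H then (1:ℂ) else 0)‖^2 = (if b < H then (1:ℝ) else 0) := by
    intro b; split <;> simp
  simp only [h2]
  rw [sum_ite_range hH (fun _ => (1:ℝ))]
  simp

lemma Gsq_bound {m : ℕ} (hm : 0 < m) {f : ℤ → ℂ} (hper : ∀ x : ℤ, f (x + m) = f x)
    {M : ℝ} (hM : ∀ n ∈ range m, ‖∑ b ∈ range m, e ((b:ℝ) * n / m) * f b‖ ≤ M)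
    {H : ℕ} (hH : H ≤ m) :
    ∑ x ∈ range m, ‖∑ h ∈ range H, f ((x:ℕ) + (h:ℕ))‖^2 ≤ M^2 * H := by
  have hmR : (0:ℝ) < m := by exact_mod_cast hm
  set D : ℕ → ℂ := fun n => ∑ h ∈ range H, e ((h:ℝ) * n / m) with hD
  set Sh : ℕ → ℂ := fun n => ∑ b ∈ range m, e ((b:ℝ) * n / m) * f b with hSh
  set c : ℕ → ℂ := fun n => (m:ℂ)⁻¹ * ((starRingEnd ℂ) (D n) * Sh n) with hc
  have key : ∀ x : ℕ, (∑ h ∈ range H, f ((x:ℕ) + (h:ℕ)))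
      = ∑ n ∈ range m, e (-((x:ℝ) * n / m)) * c n := by
    intro x
    have := G_eq hm hper H (x:ℤ)
    rw [show ((((x:ℕ):ℤ)):ℝ) = (x:ℝ) by push_cast; rfl] at this
    exact this
  simp only [key]
  rw [parseval' hm c]
  have term : ∀ n ∈ range m, ‖c n‖^2 ≤ (m:ℝ)⁻¹^2 * (‖D n‖^2 * M^2) := by
    intro n hn
    have h1 : ‖c n‖^2 = (m:ℝ)⁻¹^2 * (‖D n‖^2 * ‖Sh n‖^2) := by
      rw [hc]
      simp only [norm_mul, norm_inv, RCLike.norm_conj, Complex.norm_natCast]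
      ring
    rw [h1]
    have h2 : ‖Sh n‖^2 ≤ M^2 := by
      have := hM n hn
      nlinarith [norm_nonneg (Sh n)]
    have h3 : (0:ℝ) ≤ ‖D n‖^2 := sq_nonneg _
    have h4 : ‖D n‖^2 * ‖Sh n‖^2 ≤ ‖D n‖^2 * M^2 := mul_le_mul_of_nonneg_left h2 h3
    exact mul_le_mul_of_nonneg_left h4 (sq_nonneg _)
  calc (m:ℝ) * ∑ n ∈ range m, ‖c n‖^2
      ≤ (m:ℝ) * ∑ n ∈ range m, (m:ℝ)⁻¹^2 * (‖D n‖^2 * M^2) := by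
        apply mul_le_mul_of_nonneg_left (Finset.sum_le_sum term) (le_of_lt hmR)
    _ = (m:ℝ) * ((m:ℝ)⁻¹^2 * ((∑ n ∈ range m, ‖D n‖^2) * M^2)) := by
        rw [← Finset.mul_sum, ← Finset.sum_mul]
    _ = (m:ℝ) * ((m:ℝ)⁻¹^2 * (((m:ℝ) * H) * M^2)) := by
        rw [Dsq hm hH]
    _ = M^2 * H := by
        field_simp

section Shift
variable {f : ℤ → ℂ}

lemma shift_eq (h : ℤ) (a B : ℤ) :
    ∑ x ∈ Finset.Icc a B, f (x + h) = ∑ x ∈ Finset.Icc (a+h) (B+h), f x := by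
  rw [← Finset.map_add_right_Icc, Finset.sum_map]
  rfl

lemma norm_sum_le_card (hnorm : ∀ x, ‖f x‖ = 1) (s : Finset ℤ) :
    ‖∑ x ∈ s, f x‖ ≤ s.card := by
  calc ‖∑ x ∈ s, f x‖ ≤ ∑ x ∈ s, ‖f x‖ := norm_sum_le _ _
    _ = s.card := by simp [hnorm]

lemma sum_diff_bound (hnorm : ∀ x, ‖f x‖ = 1) (a B : ℤ) (h : ℕ) :
    ‖∑ x ∈ Finset.Icc (a+(h:ℤ)) (B+(h:ℤ)), f x - ∑ x ∈ Finset.Icc a B, f x‖ ≤ 2*h := by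
  set s := Finset.Icc (a+(h:ℤ)) (B+(h:ℤ)) with hs
  set t := Finset.Icc a B with ht
  have h1 : ∑ x ∈ s, f x - ∑ x ∈ t, f x = ∑ x ∈ s \ t, f x - ∑ x ∈ t \ s, f x := by
    rw [← Finset.sum_inter_add_sum_sdiff s t f, ← Finset.sum_inter_add_sum_sdiff t s f,
      Finset.inter_comm]
    ring
  rw [h1]
  have h2 : ‖∑ x ∈ s \ t, f x - ∑ x ∈ t \ s, f x‖ ≤ ‖∑ x ∈ s \ t, f x‖ + ‖∑ x ∈ t \ s, f x‖ :=
    norm_sub_le _ _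
  have h3 : (s \ t).card ≤ h := by
    have : s \ t ⊆ Finset.Icc (B+1) (B+h) := by
      intro x hx
      simp only [hs, ht, Finset.mem_sdiff, Finset.mem_Icc] at hx ⊢
      omega
    calc (s \ t).card ≤ (Finset.Icc (B+1) (B+(h:ℤ))).card := Finset.card_le_card this
      _ = h := by rw [Int.card_Icc]; omega
  have h4 : (t \ s).card ≤ h := by
    have : t \ s ⊆ Finset.Icc a (a+h-1) := by
      intro x hx
      simp only [hs, ht, Finset.mem_sdiff, Finset.mem_Icc] at hx ⊢
      omega
    calc (t \ s).card ≤ (Finset.Icc a (a+(h:ℤ)-1)).card := Finset.card_le_card this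
      _ = h := by rw [Int.card_Icc]; omega
  have h5 := norm_sum_le_card hnorm (s \ t)
  have h6 := norm_sum_le_card hnorm (t \ s)
  have h7 : ((s \ t).card : ℝ) ≤ h := by exact_mod_cast h3
  have h8 : ((t \ s).card : ℝ) ≤ h := by exact_mod_cast h4
  linarith

end Shift

lemma short_main {m : ℕ} (hm : 0 < m) {f : ℤ → ℂ} (hper : ∀ x : ℤ, f (x + m) = f x)
    (hnorm : ∀ x, ‖f x‖ = 1) {M : ℝ}
    (hM : ∀ n ∈ range m, ‖∑ b ∈ range m, e ((b:ℝ) * n / m) * f b‖ ≤ M)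
    (hM1 : 1 ≤ M) {a B : ℤ} (hab : a ≤ B) (hlen : B - a + 1 ≤ m) :
    ‖∑ x ∈ Finset.Icc a B, f x‖ ≤ 5 * Real.sqrt (M * (B - a + 1)) := by
  have hM0 : 0 ≤ M := le_trans zero_le_one hM1
  set N : ℕ := (B - a + 1).toNat with hNdef
  have hN1 : 1 ≤ N := by omega
  have hNm : N ≤ m := by omega
  have hNZ : (N:ℤ) = B - a + 1 := by omega
  have hNR : (N:ℝ) = ((B:ℝ) - a + 1) := by exact_mod_cast hNZ
  rw [← hNR]
  by_cases hcase : (N:ℝ) ≤ M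
  · -- trivial case
    have h1 : ‖∑ x ∈ Finset.Icc a B, f x‖ ≤ N := by
      have := norm_sum_le_card hnorm (Finset.Icc a B)
      rwa [Int.card_Icc, show (B + 1 - a).toNat = N by omega] at this
    refine le_trans h1 ?_
    have h2 : (N:ℝ) ≤ Real.sqrt (M * N) := by
      rw [Real.le_sqrt (Nat.cast_nonneg N) (by positivity)]
      have hN0 : (0:ℝ) ≤ N := Nat.cast_nonneg N
      nlinarith
    have h3 : (0:ℝ) ≤ Real.sqrt (M * N) := Real.sqrt_nonneg _
    linarith
  · push_neg at hcase
    -- M < N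
    set T : ℝ := (M^2 * N)^((1:ℝ)/3) with hTdef
    have hMN0 : (0:ℝ) < M^2 * N := by positivity
    have hT0 : 0 < T := Real.rpow_pos_of_pos hMN0 _
    have hT3 : T^(3:ℕ) = M^2 * N := by
      rw [hTdef, ← Real.rpow_natCast ((M^2*N)^((1:ℝ)/3)) 3, ← Real.rpow_mul (le_of_lt hMN0)]
      norm_num
    have hN1R : (1:ℝ) ≤ N := by exact_mod_cast hN1
    have hT1 : 1 ≤ T := by
      apply le_of_pow_le_pow_left₀ (n := 3) (by norm_num) (le_of_lt hT0)
      rw [hT3]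
      nlinarith
    have hTN : T ≤ N := by
      apply le_of_pow_le_pow_left₀ (n := 3) (by norm_num) (Nat.cast_nonneg N)
      rw [hT3]
      have h1 : M^2 ≤ (N:ℝ)^2 := by nlinarith
      have h2 : M^2 * N ≤ (N:ℝ)^2 * N := mul_le_mul_of_nonneg_right h1 (Nat.cast_nonneg N)
      calc M^2 * (N:ℝ) ≤ (N:ℝ)^2 * N := h2
        _ = (N:ℝ)^3 := by ring
    set H : ℕ := ⌈T⌉₊ with hHdef
    have hH1 : 1 ≤ H := Nat.one_le_iff_ne_zero.mpr (by
      have := Nat.ceil_pos.mpr hT0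
      omega)
    have hHT : T ≤ H := Nat.le_ceil T
    have hHT2 : (H:ℝ) ≤ 2 * T := by
      have := Nat.ceil_lt_add_one (le_of_lt hT0)
      linarith
    have hHN : H ≤ N := Nat.ceil_le.mpr hTN
    have hHm : H ≤ m := le_trans hHN hNm
    have hHpos : (0:ℝ) < H := by exact_mod_cast hH1
    -- Step A
    set S := ∑ x ∈ Finset.Icc a B, f x with hSdef
    have stepA : ‖(H:ℂ) * S - ∑ h ∈ range H, ∑ x ∈ Finset.Icc a B, f (x + (h:ℤ))‖
        ≤ 2 * (H:ℝ)^2 := by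
      have e1 : (H:ℂ) * S = ∑ _h ∈ range H, S := by
        rw [Finset.sum_const, Finset.card_range, nsmul_eq_mul]
      rw [e1, ← Finset.sum_sub_distrib]
      calc ‖∑ h ∈ range H, (S - ∑ x ∈ Finset.Icc a B, f (x + (h:ℤ)))‖
          ≤ ∑ h ∈ range H, ‖S - ∑ x ∈ Finset.Icc a B, f (x + (h:ℤ))‖ := norm_sum_le _ _
        _ ≤ ∑ _h ∈ range H, 2 * (H:ℝ) := by
            apply Finset.sum_le_sum
            intro h hh
            rw [shift_eq (h:ℤ) a B, norm_sub_rev]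
            refine le_trans (sum_diff_bound hnorm a B h) ?_
            have : (h:ℝ) ≤ H := by
              have := Finset.mem_range.mp hh
              exact_mod_cast le_of_lt this
            linarith
        _ = 2 * (H:ℝ)^2 := by
            rw [Finset.sum_const, Finset.card_range, nsmul_eq_mul]
            ring
    -- Step B + C
    have stepC : ∑ x ∈ Finset.Icc a B, ‖∑ h ∈ range H, f (x + (h:ℤ))‖^2 ≤ M^2 * H := by
      have hgper : ∀ x : ℤ, ‖∑ h ∈ range H, f ((x + (m:ℤ)) + (h:ℤ))‖^2
          = ‖∑ h ∈ range H, f (x + (h:ℤ))‖^2 := by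
        intro x
        congr 2
        refine sum_congr rfl fun h _ => ?_
        rw [show x + (m:ℤ) + h = (x + h) + m by ring, hper]
      refine le_trans (sum_le_period hm (fun x => sq_nonneg _) hgper hlen) ?_
      have := Gsq_bound hm hper hM hHm
      refine le_trans (le_of_eq ?_) this
      refine sum_congr rfl fun x _ => ?_
      norm_num
    have stepB : ‖∑ h ∈ range H, ∑ x ∈ Finset.Icc a B, f (x + (h:ℤ))‖
        ≤ Real.sqrt N * (M * Real.sqrt H) := by
      rw [Finset.sum_comm]
      calc ‖∑ x ∈ Finset.Icc a B, ∑ h ∈ range H, f (x + (h:ℤ))‖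
          ≤ ∑ x ∈ Finset.Icc a B, ‖∑ h ∈ range H, f (x + (h:ℤ))‖ := norm_sum_le _ _
        _ ≤ Real.sqrt (N * (M^2 * H)) := by
            rw [Real.le_sqrt (Finset.sum_nonneg fun x _ => norm_nonneg _) (by positivity)]
            calc (∑ x ∈ Finset.Icc a B, ‖∑ h ∈ range H, f (x + (h:ℤ))‖)^2
                ≤ (∑ _x ∈ Finset.Icc a B, (1:ℝ)^2) *
                  (∑ x ∈ Finset.Icc a B, ‖∑ h ∈ range H, f (x + (h:ℤ))‖^2) := by
                  have := Finset.sum_mul_sq_le_sq_mul_sq (Finset.Icc a B) (fun _ => (1:ℝ))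
                    (fun x => ‖∑ h ∈ range H, f (x + (h:ℤ))‖)
                  simpa using this
              _ ≤ (N:ℝ) * (M^2 * H) := by
                  apply mul_le_mul _ stepC (Finset.sum_nonneg fun x _ => sq_nonneg _)
                    (Nat.cast_nonneg N)
                  · rw [Finset.sum_const, nsmul_eq_mul, Int.card_Icc,
                      show (B + 1 - a).toNat = N by omega]
                    norm_num
        _ = Real.sqrt N * (M * Real.sqrt H) := by
            rw [Real.sqrt_mul (Nat.cast_nonneg N), Real.sqrt_mul (sq_nonneg M),
              Real.sqrt_sq hM0]
    -- combine
    have combine : (H:ℝ) * ‖S‖ ≤ Real.sqrt N * (M * Real.sqrt H) + 2 * (H:ℝ)^2 := by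
      have h1 : (H:ℝ) * ‖S‖ = ‖(H:ℂ) * S‖ := by
        rw [norm_mul, Complex.norm_natCast]
      rw [h1]
      calc ‖(H:ℂ) * S‖ ≤ ‖∑ h ∈ range H, ∑ x ∈ Finset.Icc a B, f (x + (h:ℤ))‖
          + 2 * (H:ℝ)^2 := by
            have := norm_sub_norm_le ((H:ℂ) * S) (∑ h ∈ range H, ∑ x ∈ Finset.Icc a B, f (x + (h:ℤ)))
            linarith [stepA]
        _ ≤ Real.sqrt N * (M * Real.sqrt H) + 2 * (H:ℝ)^2 := by linarith [stepB]
    -- divide by H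
    have hsqH : Real.sqrt H * Real.sqrt H = H := Real.mul_self_sqrt (le_of_lt hHpos)
    have hsqHpos : 0 < Real.sqrt H := Real.sqrt_pos.mpr hHpos
    have key : ‖S‖ ≤ M * Real.sqrt N / Real.sqrt H + 2 * H := by
      rw [← mul_le_mul_iff_right₀ hHpos]
      have hds : (H:ℝ) / Real.sqrt H = Real.sqrt H := Real.div_sqrt
      have expand : (H:ℝ) * (M * Real.sqrt N / Real.sqrt H + 2 * H)
          = Real.sqrt N * (M * Real.sqrt H) + 2 * (H:ℝ)^2 := by
        calc (H:ℝ) * (M * Real.sqrt N / Real.sqrt H + 2 * H)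
            = M * Real.sqrt N * ((H:ℝ) / Real.sqrt H) + 2 * (H:ℝ)^2 := by ring
          _ = Real.sqrt N * (M * Real.sqrt H) + 2 * (H:ℝ)^2 := by rw [hds]; ring
      rw [expand]
      exact combine
    -- M * sqrt N / sqrt H ≤ T  and 2H ≤ 4T
    have hMsqrtN : M * Real.sqrt N = T * Real.sqrt T := by
      have lhs_sq : (M * Real.sqrt N)^2 = M^2 * N := by
        rw [mul_pow, Real.sq_sqrt (Nat.cast_nonneg N)]
      have rhs_sq : (T * Real.sqrt T)^2 = T^3 := by
        rw [mul_pow, Real.sq_sqrt (le_of_lt hT0)]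
        ring
      have h1 : (M * Real.sqrt N)^2 = (T * Real.sqrt T)^2 := by
        rw [lhs_sq, rhs_sq, hT3]
      have h2 : 0 ≤ M * Real.sqrt N := mul_nonneg hM0 (Real.sqrt_nonneg _)
      have h3 : 0 ≤ T * Real.sqrt T := mul_nonneg (le_of_lt hT0) (Real.sqrt_nonneg _)
      exact (pow_left_inj₀ h2 h3 two_ne_zero).mp h1
    have hdiv : M * Real.sqrt N / Real.sqrt H ≤ T := by
      rw [div_le_iff₀ hsqHpos, hMsqrtN]
      have : Real.sqrt T ≤ Real.sqrt H := Real.sqrt_le_sqrt hHT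
      nlinarith [Real.sqrt_nonneg T]
    have hTfin : T ≤ Real.sqrt (M * N) := by
      have hz : (0:ℝ) < M * N := by positivity
      have hsz : Real.sqrt (M*N) * Real.sqrt (M*N) = M * N := Real.mul_self_sqrt (le_of_lt hz)
      apply le_of_pow_le_pow_left₀ (n := 3) (by norm_num) (Real.sqrt_nonneg _)
      rw [hT3]
      have hMs : M ≤ Real.sqrt (M * N) := by
        rw [Real.le_sqrt hM0 (le_of_lt hz)]
        nlinarith
      calc M^2 * N = M * (M * N) := by ring
        _ ≤ Real.sqrt (M*N) * (M * N) := mul_le_mul_of_nonneg_right hMs (le_of_lt hz)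
        _ = Real.sqrt (M*N)^3 := by
            rw [pow_succ, pow_two, hsz]
            ring
    calc ‖S‖ ≤ M * Real.sqrt N / Real.sqrt H + 2 * H := key
      _ ≤ T + 4 * T := by linarith
      _ ≤ 5 * Real.sqrt (M * N) := by linarith
lemma sum_Ioc_split {f : ℤ → ℂ} {a b c : ℤ} (h1 : a ≤ b) (h2 : b ≤ c) :
    ∑ x ∈ Finset.Ioc a c, f x = ∑ x ∈ Finset.Ioc a b, f x + ∑ x ∈ Finset.Ioc b c, f x := by
  have hd : Disjoint (Finset.Ioc a b) (Finset.Ioc b c) := by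
    rw [Finset.disjoint_left]
    intro x hx hx2
    rw [Finset.mem_Ioc] at hx hx2
    omega
  rw [← Finset.Ioc_union_Ioc_eq_Ioc h1 h2, Finset.sum_union hd]

lemma Ioc_eq_Icc (c d : ℤ) : Finset.Ioc c d = Finset.Icc (c+1) d := by
  ext x
  simp only [Finset.mem_Ioc, Finset.mem_Icc]
  omega

lemma sum_periods {m : ℕ} (hm : 0 < m) {f : ℤ → ℂ} (hper : ∀ x : ℤ, f (x + m) = f x)
    (a : ℤ) (k : ℕ) :
    ∑ x ∈ Finset.Ioc (a - 1) (a - 1 + m * k), f x = (k:ℂ) * ∑ b ∈ range m, f b := by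
  induction k with
  | zero =>
    norm_num
  | succ k ih =>
    have hmk : (0:ℤ) ≤ (m:ℤ) * k := by positivity
    have h1 : a - 1 ≤ a - 1 + (m:ℤ)*k := by omega
    have h2 : a - 1 + (m:ℤ)*k ≤ a - 1 + m*(k+1) := by
      have : (m:ℤ)*(k+1) = m*k + m := by ring
      omega
    have hsplit := sum_Ioc_split (f := f) h1 h2
    rw [show a - 1 + (m:ℤ) * ((k+1:ℕ):ℤ) = a - 1 + ((m:ℤ)*(k+1)) by push_cast; ring]
    rw [hsplit, ih]
    have hlast : ∑ x ∈ Finset.Ioc (a - 1 + (m:ℤ)*k) (a - 1 + (m:ℤ)*((k:ℤ)+1)), f x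
        = ∑ b ∈ range m, f b := by
      rw [Ioc_eq_Icc]
      have := sum_one_period hm hper (a - 1 + (m:ℤ)*k + 1)
      rw [show a - 1 + (m:ℤ)*k + 1 + m - 1 = a - 1 + (m:ℤ)*((k:ℤ)+1) by ring] at this
      rw [show a - 1 + (m:ℤ)*((k:ℤ)+1) = a - 1 + (m:ℤ)*k + 1 + ((m:ℤ)*((k:ℤ)+1) - ((m:ℤ)*k + 1)) by ring] at this
      rw [show a - 1 + (m:ℤ)*((k:ℤ)+1) = a - 1 + (m:ℤ)*k + 1 + ((m:ℤ)*((k:ℤ)+1) - ((m:ℤ)*k + 1)) by ring]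
      exact this
    rw [hlast]
    push_cast
    ring

set_option maxHeartbeats 2000000 in
theorem stmt11 : ∃ C : ℝ, 0 < C ∧
    ∀ m : ℕ, 0 < m → ∀ f : ℤ → ℂ,
      (∀ x : ℤ, f (x + (m : ℤ)) = f x) → (∀ x : ℤ, ‖f x‖ = 1) →
      ∀ ℓ : ℝ, 0 < ℓ → ∀ c : ℝ,
        ‖∑ x ∈ Finset.Icc ⌈c⌉ ⌊c + ℓ⌋, f x‖ ≤
          C * (Real.sqrt (expSumMax m f * ℓ) + expSumMax m f * ℓ / (m : ℝ) + 1) := by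
  refine ⟨20, by norm_num, ?_⟩
  intro m hm f hper hnorm ℓ hℓ c
  set a : ℤ := ⌈c⌉ with ha
  set B : ℤ := ⌊c + ℓ⌋ with hB
  set M : ℝ := expSumMax m f with hMdef
  have hrepr : M = ⨆ i : Fin m, ‖∑ b ∈ range m, e ((b:ℝ) * ((i:ℕ):ℝ) / m) * f b‖ := rfl
  have hfin : Nonempty (Fin m) := ⟨⟨0, hm⟩⟩
  have hbdd : BddAbove (Set.range fun i : Fin m =>
      ‖∑ b ∈ range m, e ((b:ℝ) * ((i:ℕ):ℝ) / m) * f b‖) :=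
    Set.Finite.bddAbove (Set.finite_range _)
  have hM : ∀ n ∈ range m, ‖∑ b ∈ range m, e ((b:ℝ) * (n:ℝ) / m) * f b‖ ≤ M := by
    intro n hn
    rw [hrepr]
    exact le_ciSup hbdd ⟨n, Finset.mem_range.mp hn⟩
  have hM0 : 0 ≤ M := le_trans (norm_nonneg _) (hM 0 (Finset.mem_range.mpr hm))
  have hmR : (0:ℝ) < m := by exact_mod_cast hm
  -- 1 ≤ M via Parseval
  have hM1 : 1 ≤ M := by
    have hp := parseval hm (fun b => f b)
    have hone : ∀ b ∈ range m, ‖f (b:ℤ)‖^2 = 1 := fun b _ => by rw [hnorm]; norm_num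
    rw [Finset.sum_congr rfl hone] at hp
    simp only [Finset.sum_const, Finset.card_range, nsmul_eq_mul, mul_one] at hp
    have hub : ∑ n ∈ range m, ‖∑ b ∈ range m, e ((b:ℝ) * (n:ℝ) / m) * f b‖^2
        ≤ ∑ _n ∈ range m, M^2 := by
      apply Finset.sum_le_sum
      intro n hn
      have := hM n hn
      nlinarith [norm_nonneg (∑ b ∈ range m, e ((b:ℝ) * (n:ℝ) / m) * f b)]
    rw [hp] at hub
    simp only [Finset.sum_const, Finset.card_range, nsmul_eq_mul] at hub
    have hmM : (m:ℝ) ≤ M^2 := by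
      have h1R : (1:ℝ) ≤ m := by exact_mod_cast hm
      nlinarith
    have h1R : (1:ℝ) ≤ m := by exact_mod_cast hm
    nlinarith
  have hsq0 : (0:ℝ) ≤ Real.sqrt (M * ℓ) := Real.sqrt_nonneg _
  have hdiv0 : (0:ℝ) ≤ M * ℓ / m := by positivity
  by_cases hab : B < a
  · rw [Finset.Icc_eq_empty (by omega)]
    simp only [Finset.sum_empty, norm_zero]
    positivity
  push_neg at hab
  have hac : (c:ℝ) ≤ a := Int.le_ceil c
  have hBc : (B:ℝ) ≤ c + ℓ := Int.floor_le _
  have hlenR : ((B:ℝ) - a + 1) ≤ ℓ + 1 := by linarith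
  by_cases hl1 : ℓ < 1
  · -- then B = a
    have hBa : B = a := by
      have : (B:ℝ) - a < 1 := by linarith
      have h2 : ((B - a : ℤ):ℝ) < 1 := by push_cast; linarith
      have h3 : B - a < 1 := by exact_mod_cast h2
      omega
    rw [hBa, Finset.Icc_self, Finset.sum_singleton, hnorm]
    nlinarith
  push_neg at hl1
  have hlen2 : ((B:ℝ) - a + 1) ≤ 2 * ℓ := by linarith
  by_cases hNm : B - a + 1 ≤ (m:ℤ)
  · -- short interval
    have h1 := short_main hm hper hnorm hM hM1 hab hNm
    have h2 : Real.sqrt (M * ((B:ℝ) - a + 1)) ≤ Real.sqrt (M * (2 * ℓ)) :=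
      Real.sqrt_le_sqrt (by nlinarith)
    have h3 : Real.sqrt (M * (2*ℓ)) ≤ 2 * Real.sqrt (M * ℓ) := by
      rw [show M * (2*ℓ) = 2 * (M * ℓ) by ring, Real.sqrt_mul (by norm_num) (M*ℓ)]
      have : Real.sqrt 2 ≤ 2 := by
        nlinarith [Real.sq_sqrt (by norm_num : (0:ℝ) ≤ 2), Real.sqrt_nonneg 2]
      nlinarith [Real.sqrt_nonneg (M*ℓ)]
    calc ‖∑ x ∈ Finset.Icc a B, f x‖ ≤ 5 * Real.sqrt (M * ((B:ℝ) - a + 1)) := h1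
      _ ≤ 10 * Real.sqrt (M * ℓ) := by linarith
      _ ≤ 20 * (Real.sqrt (M * ℓ) + M * ℓ / m + 1) := by linarith
  · -- long interval: split off full periods
    push_neg at hNm
    have hmZ : (0:ℤ) < (m:ℤ) := by exact_mod_cast hm
    obtain ⟨k, hkZ⟩ : ∃ k : ℕ, ((k:ℤ)) = (B - a + 1) / m := by
      refine ⟨((B - a + 1) / m).toNat, ?_⟩
      have : 0 ≤ (B - a + 1) / (m:ℤ) := Int.ediv_nonneg (by omega) (by omega)
      omega
    have hk1 : 1 ≤ k := by
      have : 1 ≤ (B - a + 1) / (m:ℤ) := by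
        apply Int.le_ediv_iff_mul_le hmZ |>.mpr
        omega
      omega
    have hkm : (m:ℤ) * k ≤ B - a + 1 := by
      rw [hkZ, mul_comm]
      exact Int.ediv_mul_le _ (by omega)
    have hrem : B - a + 1 - (m:ℤ)*k < m := by
      rw [hkZ]
      have := Int.emod_add_mul_ediv (B - a + 1) m
      have hmod := Int.emod_lt_of_pos (B - a + 1) hmZ
      have hmod0 := Int.emod_nonneg (B - a + 1) (by omega : (m:ℤ) ≠ 0)
      nlinarith [Int.emod_add_mul_ediv (B - a + 1) (m:ℤ)]
    have hsplit : ∑ x ∈ Finset.Icc a B, f x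
        = (∑ x ∈ Finset.Ioc (a-1) (a - 1 + (m:ℤ)*k), f x) + ∑ x ∈ Finset.Ioc (a - 1 + (m:ℤ)*k) B, f x := by
      rw [show Finset.Icc a B = Finset.Ioc (a-1) B from by rw [Ioc_eq_Icc]; congr 1; omega]
      exact sum_Ioc_split (f := f) (by omega : a - 1 ≤ a - 1 + (m:ℤ)*k)
        (by omega : a - 1 + (m:ℤ)*k ≤ B)
    have hfirst := sum_periods hm hper a k
    have hP : ‖∑ b ∈ range m, f b‖ ≤ M := by
      have h0 := hM 0 (Finset.mem_range.mpr hm)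
      have : ∀ b ∈ range m, e ((b:ℝ) * ((0:ℕ):ℝ) / m) * f b = f b := by
        intro b _
        rw [show ((b:ℝ) * ((0:ℕ):ℝ) / m) = 0 by push_cast; ring]
        rw [show e 0 = 1 by rw [show (0:ℝ) = ((0:ℤ):ℝ) by norm_num]; exact e_int 0]
        ring
      rwa [Finset.sum_congr rfl this] at h0
    have hfirstN : ‖∑ x ∈ Finset.Ioc (a-1) (a - 1 + (m:ℤ)*k), f x‖ ≤ k * M := by
      rw [hfirst, norm_mul]
      simp only [Complex.norm_natCast]
      exact mul_le_mul_of_nonneg_left hP (Nat.cast_nonneg k)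
    have hkR : (k:ℝ) * M ≤ 2 * (M * ℓ) / m := by
      have hkb : ((m:ℤ):ℝ) * k ≤ (B:ℝ) - a + 1 := by exact_mod_cast hkm
      have h4 : (k:ℝ) ≤ 2*ℓ/m := by
        rw [le_div_iff₀ hmR]
        push_cast at hkb ⊢
        nlinarith
      calc (k:ℝ) * M ≤ (2*ℓ/m) * M := mul_le_mul_of_nonneg_right h4 hM0
        _ = 2 * (M * ℓ) / m := by ring
    have hsecond : ‖∑ x ∈ Finset.Ioc (a - 1 + (m:ℤ)*k) B, f x‖ ≤ 10 * Real.sqrt (M * ℓ) := by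
      by_cases hend : a - 1 + (m:ℤ)*k = B
      · rw [hend, Finset.Ioc_self]
        simp only [Finset.sum_empty, norm_zero]
        positivity
      · have hlt : a - 1 + (m:ℤ)*k < B := by omega
        rw [Ioc_eq_Icc]
        have hab2 : a + (m:ℤ)*k ≤ B := by omega
        have hlen3 : B - (a - 1 + (m:ℤ)*k + 1) + 1 ≤ (m:ℤ) := by omega
        have h1 := short_main hm hper hnorm hM hM1 (by omega : a - 1 + (m:ℤ)*k + 1 ≤ B) hlen3
        refine le_trans h1 ?_
        have hmlℓ : ((m:ℤ):ℝ) ≤ ℓ := by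
          have : (m:ℤ) ≤ B - a := by omega
          have h2 : ((m:ℤ):ℝ) ≤ (B:ℝ) - a := by exact_mod_cast this
          linarith
        have hlenR2 : ((B:ℝ) - (a - 1 + (m:ℤ)*k + 1) + 1) ≤ 2 * ℓ := by
          have : B - (a - 1 + (m:ℤ)*k + 1) + 1 ≤ (m:ℤ) := hlen3
          have h2 : ((B - (a - 1 + (m:ℤ)*k + 1) + 1 : ℤ):ℝ) ≤ ((m:ℤ):ℝ) := by exact_mod_cast this
          push_cast at h2 ⊢
          push_cast at hmlℓ
          linarith
        have h2 : Real.sqrt (M * ((B:ℝ) - ((a:ℝ) - 1 + (m:ℝ)*k + 1) + 1)) ≤ Real.sqrt (M * (2 * ℓ)) := by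
          apply Real.sqrt_le_sqrt
          apply mul_le_mul_of_nonneg_left _ hM0
          push_cast at hlenR2
          linarith
        have h3 : Real.sqrt (M * (2*ℓ)) ≤ 2 * Real.sqrt (M * ℓ) := by
          rw [show M * (2*ℓ) = 2 * (M * ℓ) by ring, Real.sqrt_mul (by norm_num) (M*ℓ)]
          have : Real.sqrt 2 ≤ 2 := by
            nlinarith [Real.sq_sqrt (by norm_num : (0:ℝ) ≤ 2), Real.sqrt_nonneg 2]
          nlinarith [Real.sqrt_nonneg (M*ℓ)]
        have harg : ((B:ℝ) - ((a:ℝ) - 1 + (m:ℝ)*(k:ℝ) + 1) + 1) = ((B:ℝ) - ((a - 1 + (m:ℤ)*k + 1 : ℤ):ℝ) + 1) := by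
          push_cast
          ring
        calc (5:ℝ) * Real.sqrt (M * ((B:ℝ) - ((a - 1 + (m:ℤ)*k + 1 : ℤ):ℝ) + 1))
            = 5 * Real.sqrt (M * ((B:ℝ) - ((a:ℝ) - 1 + (m:ℝ)*k + 1) + 1)) := by rw [harg]
          _ ≤ 5 * (2 * Real.sqrt (M * ℓ)) := by
              have h5 := le_trans h2 h3
              linarith
          _ = 10 * Real.sqrt (M * ℓ) := by ring
    calc ‖∑ x ∈ Finset.Icc a B, f x‖
        ≤ ‖∑ x ∈ Finset.Ioc (a-1) (a - 1 + (m:ℤ)*k), f x‖ + ‖∑ x ∈ Finset.Ioc (a - 1 + (m:ℤ)*k) B, f x‖ := by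
          rw [hsplit]
          exact norm_add_le _ _
      _ ≤ (k:ℝ) * M + 10 * Real.sqrt (M * ℓ) := by linarith
      _ ≤ 2 * (M * ℓ) / m + 10 * Real.sqrt (M * ℓ) := by linarith
      _ ≤ 20 * (Real.sqrt (M * ℓ) + M * ℓ / m + 1) := by
          have : 2 * (M * ℓ) / m ≤ 20 * (M * ℓ / m) := by
            rw [div_le_iff₀ hmR]
            have : M * ℓ / m * m = M * ℓ := div_mul_cancel₀ _ (ne_of_gt hmR)
            nlinarith [hdiv0]
          linarith
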